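/- Let f : R → S be a ring homomorphism whose image is commutative, and let T = { t ∈ im f : t^{-1} ∈ S }. Then the division closure and rational closure of im f in S both equal (im f)T^{-1} = { f(r) t^{-1} : r ∈ R, t ∈ T }, a commutative subring of S. -/

import Mathlib

section AuxDivRat

open Matrix

lemma minor_step {C S : Type*} [CommRing C] [Ring S] (φ : C →+* S)
    {n : ℕ} (M : Matrix (Fin n) (Fin n) C) (B : Matrix (Fin n) (Fin n) S)
    (hBM : B * M.map φ = 1) (u : S) {k : ℕ} (hk : k < n)
    (IH : ∀ rows cols : Fin (k+1) → Fin n, φ (M.submatrix rows cols).det * u = 0)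
    (rows cols : Fin k → Fin n) : φ (M.submatrix rows cols).det * u = 0 := by
  by_cases hc : Function.Injective cols
  · have hns : ∃ q0 : Fin n, ∀ l, cols l ≠ q0 := by
      by_contra h
      push_neg at h
      have := Fintype.card_le_of_surjective cols (fun q => h q)
      simp only [Fintype.card_fin] at this
      omega
    obtain ⟨q0, hq0⟩ := hns
    set cols' : Fin (k+1) → Fin n := Fin.cons q0 cols with hcols'
    set c : Fin (k+1) → C := fun j =>
      (-1) ^ (j : ℕ) * (M.submatrix rows (fun b => cols' (j.succAbove b))).det with hc'
    set x : Fin n → S := fun l => ∑ j : Fin (k+1), if l = cols' j then φ (c j) * u else 0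
      with hx'
    have hMx : (M.map φ).mulVec x = 0 := by
      funext i
      have laplace : (M.submatrix (Fin.cons i rows) cols').det
          = ∑ j : Fin (k+1), M i (cols' j) * c j := by
        rw [Matrix.det_succ_row_zero]
        refine Finset.sum_congr rfl fun j _ => ?_
        rw [Matrix.submatrix_submatrix]
        have h1 : Fin.cons i rows ∘ Fin.succ = rows := by
          funext b; simp [Fin.cons_succ]
        have h2 : (M.submatrix (Fin.cons i rows) cols') 0 j = M i (cols' j) := by
          simp [Matrix.submatrix_apply]
        rw [h1, h2, hc']
        simp only [Function.comp_def]
        ring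
      have : ((M.map φ).mulVec x) i = φ ((M.submatrix (Fin.cons i rows) cols').det) * u := by
        rw [laplace, map_sum]
        simp only [Matrix.mulVec, dotProduct, hx', Finset.mul_sum, mul_ite, mul_zero]
        rw [Finset.sum_comm]
        rw [Finset.sum_mul]
        refine Finset.sum_congr rfl fun j _ => ?_
        rw [Finset.sum_ite_eq' Finset.univ (cols' j)]
        simp [Matrix.map_apply, _root_.map_mul, mul_assoc]
      rw [this, IH]
      rfl
    have hx0 : x = 0 := by
      have := congrArg (fun v => B.mulVec v) hMx
      simpa [Matrix.mulVec_mulVec, hBM, Matrix.one_mulVec, Matrix.mulVec_zero] using this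
    have := congrFun hx0 q0
    rw [hx'] at this
    simp only [Pi.zero_apply] at this
    rw [Finset.sum_eq_single 0] at this
    · have hc0 : c 0 = (M.submatrix rows cols).det := by
        rw [hc']
        simp only [Fin.val_zero, pow_zero, one_mul]
        have hcc : (fun b => cols' (Fin.succAbove 0 b)) = cols := by
          funext b
          simp [hcols', Fin.zero_succAbove, Fin.cons_succ]
        rw [hcc]
      rw [if_pos (by simp [hcols', Fin.cons_zero]), hc0] at this
      exact this
    · intro j _ hj
      rw [if_neg]
      obtain ⟨j', rfl⟩ := Fin.exists_succ_eq_of_ne_zero hj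
      simp only [hcols', Fin.cons_succ]
      exact fun h => hq0 j' h.symm
    · simp
  · rw [Function.not_injective_iff] at hc
    obtain ⟨a, b, hab, hne⟩ := hc
    have : (M.submatrix rows cols).det = 0 :=
      Matrix.det_zero_of_column_eq hne (fun k' => by simp [Matrix.submatrix_apply, hab])
    rw [this, map_zero, zero_mul]

lemma minor_base {C S : Type*} [CommRing C] [Ring S] (φ : C →+* S)
    {n : ℕ} (M : Matrix (Fin n) (Fin n) C) (u : S) (hu : φ M.det * u = 0)
    (rows cols : Fin n → Fin n) : φ (M.submatrix rows cols).det * u = 0 := by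
  by_cases hr : Function.Injective rows
  · by_cases hc : Function.Injective cols
    · have hrb : Function.Bijective rows := (Finite.injective_iff_bijective).mp hr
      have hcb : Function.Bijective cols := (Finite.injective_iff_bijective).mp hc
      set re := Equiv.ofBijective rows hrb with hre
      set ce := Equiv.ofBijective cols hcb with hce
      have hsub : M.submatrix rows cols
          = (M.submatrix re re).submatrix id ⇑(ce.trans re.symm) := by
        rw [Matrix.submatrix_submatrix]

        funext j b
        simp only [Matrix.submatrix_apply, Function.comp_apply, id_eq, Equiv.trans_apply,
          Equiv.apply_symm_apply]
        rfl
      rw [hsub, Matrix.det_permute', Matrix.det_submatrix_equiv_self]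
      rcases Int.units_eq_one_or (Equiv.Perm.sign (ce.trans re.symm)) with h | h
      · rw [h]; simpa using hu
      · rw [h]
        simp only [Units.val_neg, Units.val_one, Int.cast_neg, Int.cast_one, neg_mul,
          one_mul, map_neg, neg_mul, hu, neg_zero]
    · rw [Function.not_injective_iff] at hc
      obtain ⟨a, b, hab, hne⟩ := hc
      rw [Matrix.det_zero_of_column_eq hne (fun k' => by simp [hab]), map_zero, zero_mul]
  · rw [Function.not_injective_iff] at hr
    obtain ⟨a, b, hab, hne⟩ := hr
    rw [Matrix.det_zero_of_row_eq hne (by funext k'; simp [hab]), map_zero, zero_mul]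

lemma det_regular {C S : Type*} [CommRing C] [Ring S] (φ : C →+* S)
    {n : ℕ} (M : Matrix (Fin n) (Fin n) C) (B : Matrix (Fin n) (Fin n) S)
    (hBM : B * M.map φ = 1) (u : S) (hu : φ M.det * u = 0) : u = 0 := by
  have key : ∀ m : ℕ, ∀ rows cols : Fin (n - m) → Fin n,
      φ (M.submatrix rows cols).det * u = 0 := by
    intro m
    induction m with
    | zero => exact minor_base φ M u hu
    | succ m ih =>
      intro rows cols
      by_cases h : n ≤ m
      · have hsz : n - m = n - (m + 1) := by omega
        have := ih (fun x => rows (Fin.cast hsz x)) (fun x => cols (Fin.cast hsz x))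
        have hdet : (M.submatrix (fun x => rows (Fin.cast hsz x)) (fun x => cols (Fin.cast hsz x))).det
            = (M.submatrix rows cols).det := by
          have : M.submatrix (fun x => rows (Fin.cast hsz x)) (fun x => cols (Fin.cast hsz x))
              = (M.submatrix rows cols).submatrix (finCongr hsz) (finCongr hsz) := by
            funext a b
            simp [Matrix.submatrix_apply]
          rw [this, Matrix.det_submatrix_equiv_self]
        rwa [hdet] at this
      · have hk : n - (m + 1) < n := by omega
        have hsz : n - m = (n - (m + 1)) + 1 := by omega
        refine minor_step φ M B hBM u hk (fun rows' cols' => ?_) rows cols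
        have := ih (fun x => rows' (Fin.cast hsz x)) (fun x => cols' (Fin.cast hsz x))
        have hdet : (M.submatrix (fun x => rows' (Fin.cast hsz x)) (fun x => cols' (Fin.cast hsz x))).det
            = (M.submatrix rows' cols').det := by
          have : M.submatrix (fun x => rows' (Fin.cast hsz x)) (fun x => cols' (Fin.cast hsz x))
              = (M.submatrix rows' cols').submatrix (finCongr hsz) (finCongr hsz) := by
            funext a b
            simp [Matrix.submatrix_apply]
          rw [this, Matrix.det_submatrix_equiv_self]
        rwa [hdet] at this
  haveI : IsEmpty (Fin (n - n)) := ⟨fun x => (Fin.cast (Nat.sub_self n) x).elim0⟩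
  have := key n isEmptyElim isEmptyElim
  rwa [Matrix.det_isEmpty, _root_.map_one, one_mul] at this
lemma det_invertible {C S : Type*} [CommRing C] [Ring S] (φ : C →+* S)
    {n : ℕ} (M : Matrix (Fin n) (Fin n) C) (B : Matrix (Fin n) (Fin n) S)
    (hMB : M.map φ * B = 1) (hBM : B * M.map φ = 1) :
    ∃ e : S, φ M.det * e = 1 ∧ e * φ M.det = 1 ∧ ∀ i j, B i j = φ (M.adjugate i j) * e := by
  set d : S := φ M.det with hd
  have hscal : ((M.det • (1 : Matrix (Fin n) (Fin n) C)).map φ)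
      = d • (1 : Matrix (Fin n) (Fin n) S) := by
    ext i j
    simp only [Matrix.map_apply, Matrix.smul_apply, Matrix.one_apply, smul_eq_mul,
      mul_ite, mul_one, mul_zero, apply_ite φ, map_zero, _root_.map_mul]
    rfl
  have hNB : ∀ i j, φ (M.adjugate i j) = d * B i j := by
    have hmat : (M.adjugate).map φ = d • B := by
      calc (M.adjugate).map φ = (M.adjugate).map φ * ((M.map φ) * B) := by rw [hMB, mul_one]
        _ = ((M.adjugate * M).map φ) * B := by rw [Matrix.map_mul, mul_assoc]
        _ = ((M.det • (1 : Matrix (Fin n) (Fin n) C)).map φ) * B := by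
              rw [Matrix.adjugate_mul]
        _ = (d • (1 : Matrix (Fin n) (Fin n) S)) * B := by rw [hscal]
        _ = d • B := by rw [Matrix.smul_mul, one_mul]
    intro i j
    have := congrFun (congrFun hmat i) j
    simpa [Matrix.map_apply, Matrix.smul_apply, smul_eq_mul] using this
  have hBN : ∀ i j, φ (M.adjugate i j) = B i j * d := by
    have hmat : (M.adjugate).map φ = B * (d • (1 : Matrix (Fin n) (Fin n) S)) := by
      calc (M.adjugate).map φ = (B * (M.map φ)) * (M.adjugate).map φ := by rw [hBM, one_mul]
        _ = B * ((M * M.adjugate).map φ) := by rw [Matrix.map_mul, mul_assoc]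
        _ = B * ((M.det • (1 : Matrix (Fin n) (Fin n) C)).map φ) := by
              rw [Matrix.mul_adjugate]
        _ = B * (d • (1 : Matrix (Fin n) (Fin n) S)) := by rw [hscal]
    intro i j
    have := congrFun (congrFun hmat i) j
    simp only [Matrix.map_apply, Matrix.mul_apply, Matrix.smul_apply, Matrix.one_apply,
      smul_eq_mul, mul_ite, mul_one, mul_zero] at this
    rwa [Finset.sum_ite_eq' Finset.univ j (fun k => B i k * d), if_pos (Finset.mem_univ j)]
      at this
  have hreg : ∀ u : S, d * u = 0 → u = 0 := fun u hu => det_regular φ M B hBM u hu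
  have hdB : ∀ i j, d * B i j = B i j * d := fun i j => by rw [← hNB, ← hBN]
  have hBφ : ∀ (c : C) i j, φ c * B i j = B i j * φ c := by
    intro c i j
    refine sub_eq_zero.mp (hreg _ ?_)
    rw [mul_sub]
    have : d * (φ c * B i j) = d * (B i j * φ c) := by
      calc d * (φ c * B i j) = φ (M.det * c) * B i j := by rw [_root_.map_mul, mul_assoc]
        _ = φ (c * M.det) * B i j := by rw [mul_comm M.det c]
        _ = φ c * (d * B i j) := by rw [_root_.map_mul, mul_assoc]
        _ = φ c * φ (M.adjugate i j) := by rw [hNB]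
        _ = φ (M.adjugate i j) * φ c := by rw [← _root_.map_mul, ← _root_.map_mul, mul_comm]
        _ = (B i j * d) * φ c := by rw [hBN]
        _ = (d * B i j) * φ c := by rw [← hdB]
        _ = d * (B i j * φ c) := by rw [mul_assoc]
    rw [this, sub_self]
  have hBB : ∀ i j k l, B i j * B k l = B k l * B i j := by
    intro i j k l
    refine sub_eq_zero.mp (hreg _ (hreg _ ?_))
    rw [mul_sub, mul_sub]
    have : d * (d * (B i j * B k l)) = d * (d * (B k l * B i j)) := by
      have e1 : ∀ a b c' e' : Fin n, d * (d * (B a b * B c' e'))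
          = φ (M.adjugate a b * M.adjugate c' e') := by
        intro a b c' e'
        rw [_root_.map_mul, hNB, hNB]
        calc d * (d * (B a b * B c' e'))
            = d * ((d * B a b) * B c' e') := by rw [mul_assoc d (B a b) (B c' e')]
          _ = d * ((B a b * d) * B c' e') := by rw [hdB]
          _ = d * (B a b * (d * B c' e')) := by rw [mul_assoc (B a b) d (B c' e')]
          _ = (d * B a b) * (d * B c' e') := (mul_assoc d (B a b) (d * B c' e')).symm
      rw [e1, e1, mul_comm (M.adjugate i j)]
    rw [this, sub_self]
  -- the commutative subring generated by the image of φ and the entries of B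
  set G : Set S := Set.range φ ∪ {x | ∃ i j, B i j = x} with hG
  have hGcomm : ∀ x ∈ G, ∀ y ∈ G, x * y = y * x := by
    rintro x (⟨cx, rfl⟩ | ⟨i, j, rfl⟩) y (⟨cy, rfl⟩ | ⟨k, l, rfl⟩)
    · rw [← _root_.map_mul, ← _root_.map_mul, mul_comm]
    · exact hBφ cx k l
    · exact (hBφ cy i j).symm
    · exact hBB i j k l
  have hCCcomm : ∀ x ∈ Subring.closure G, ∀ y ∈ Subring.closure G, x * y = y * x := by
    intro x hx y hy
    induction hx, hy using Subring.closure_induction₂ with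
    | mem_mem a b ha hb => exact hGcomm a ha b hb
    | zero_left x hx => rw [zero_mul, mul_zero]
    | zero_right x hx => rw [zero_mul, mul_zero]
    | one_left x hx => rw [one_mul, mul_one]
    | one_right x hx => rw [one_mul, mul_one]
    | neg_left x y hx hy h => rw [neg_mul, mul_neg, h]
    | neg_right x y hx hy h => rw [neg_mul, mul_neg, h]
    | add_left x y z hx hy hz h1 h2 => rw [add_mul, mul_add, h1, h2]
    | add_right x y z hx hy hz h1 h2 => rw [add_mul, mul_add, h1, h2]
    | mul_left x y z hx hy hz h1 h2 =>
        rw [mul_assoc, h2, ← mul_assoc, h1, mul_assoc]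
    | mul_right x y z hx hy hz h1 h2 =>
        rw [← mul_assoc, h1, mul_assoc, h2, ← mul_assoc]
  set CC : Subring S := Subring.closure G with hCC
  letI : CommRing CC :=
    { (inferInstance : Ring CC) with
      mul_comm := fun a b => Subtype.ext (hCCcomm a.1 a.2 b.1 b.2) }
  have hmemφ : ∀ c : C, φ c ∈ CC := fun c =>
    Subring.subset_closure (Or.inl ⟨c, rfl⟩)
  have hmemB : ∀ i j, B i j ∈ CC := fun i j =>
    Subring.subset_closure (Or.inr ⟨i, j, rfl⟩)
  set ψ : C →+* CC := φ.codRestrict CC.toSubsemiring hmemφ with hψ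
  set M' : Matrix (Fin n) (Fin n) CC := M.map ψ with hM'
  set B' : Matrix (Fin n) (Fin n) CC := fun i j => ⟨B i j, hmemB i j⟩ with hB'
  have hMB' : M' * B' = 1 := by
    ext i j
    have h1 : ((M' * B') i j : S) = (M.map φ * B) i j := by
      simp only [Matrix.mul_apply]
      push_cast
      rfl
    have h2 : ((1 : Matrix (Fin n) (Fin n) CC) i j : S)
        = (1 : Matrix (Fin n) (Fin n) S) i j := by
      by_cases h : i = j <;> simp [Matrix.one_apply, h]
    rw [h1, h2, hMB]
  have hBM' : B' * M' = 1 := by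
    ext i j
    have h1 : ((B' * M') i j : S) = (B * M.map φ) i j := by
      simp only [Matrix.mul_apply]
      push_cast
      rfl
    have h2 : ((1 : Matrix (Fin n) (Fin n) CC) i j : S)
        = (1 : Matrix (Fin n) (Fin n) S) i j := by
      by_cases h : i = j <;> simp [Matrix.one_apply, h]
    rw [h1, h2, hBM]
  have hdet1 : M'.det * B'.det = 1 := by rw [← Matrix.det_mul, hMB', Matrix.det_one]
  have hdet2 : B'.det * M'.det = 1 := by rw [← Matrix.det_mul, hBM', Matrix.det_one]
  have hψdet : (ψ M.det : S) = d := by rfl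
  have hMdet : ((M'.det : CC) : S) = d := by
    rw [hM', ← RingHom.mapMatrix_apply, ← RingHom.map_det, hψdet]
  refine ⟨(B'.det : S), ?_, ?_, ?_⟩
  · have := congrArg (fun z : CC => (z : S)) hdet1
    simpa [hMdet] using this
  · have := congrArg (fun z : CC => (z : S)) hdet2
    simpa [hMdet] using this
  · intro i j
    have h1 : d * (B'.det : S) = 1 := by
      have := congrArg (fun z : CC => (z : S)) hdet1
      simpa [hMdet] using this
    calc B i j = B i j * (d * (B'.det : S)) := by rw [h1, mul_one]
      _ = (B i j * d) * (B'.det : S) := by rw [mul_assoc]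
      _ = φ (M.adjugate i j) * (B'.det : S) := by rw [← hBN]



section EHelpers

variable {R S : Type*} [Ring R] [Ring S] (f : R →+* S)

lemma unit_comm (hcomm : ∀ a b : R, f a * f b = f b * f a)
    {t : R} {u : S} (h1 : f t * u = 1) (h2 : u * f t = 1) (a : R) :
    u * f a = f a * u := by
  calc u * f a = u * f a * (f t * u) := by rw [h1, mul_one]
    _ = u * (f a * f t) * u := by rw [← mul_assoc, ← mul_assoc]
    _ = u * (f t * f a) * u := by rw [hcomm]
    _ = (u * f t) * (f a * u) := by rw [← mul_assoc, ← mul_assoc, mul_assoc u (f t) (f a)]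
    _ = f a * u := by rw [h2, one_mul]

lemma units_comm (hcomm : ∀ a b : R, f a * f b = f b * f a)
    {t1 t2 : R} {u1 u2 : S} (h11 : f t1 * u1 = 1) (h12 : u1 * f t1 = 1)
    (h21 : f t2 * u2 = 1) (h22 : u2 * f t2 = 1) :
    u1 * u2 = u2 * u1 := by
  calc u1 * u2 = u1 * u2 * (f t1 * u1) := by rw [h11, mul_one]
    _ = u1 * (u2 * f t1) * u1 := by rw [← mul_assoc, ← mul_assoc]
    _ = u1 * (f t1 * u2) * u1 := by rw [unit_comm f hcomm h21 h22]
    _ = (u1 * f t1) * (u2 * u1) := by rw [← mul_assoc, ← mul_assoc, mul_assoc u1 (f t1) u2]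
    _ = u2 * u1 := by rw [h12, one_mul]

/-- `(im f)·T⁻¹` as a subring of `S`. -/
def Esub (hcomm : ∀ a b : R, f a * f b = f b * f a) : Subring S where
  carrier := {x : S | ∃ (r t : R) (u : S), f t * u = 1 ∧ u * f t = 1 ∧ x = f r * u}
  zero_mem' := ⟨0, 1, 1, by simp, by simp, by simp⟩
  one_mem' := ⟨1, 1, 1, by simp, by simp, by simp⟩
  add_mem' := by
    rintro x y ⟨r1, t1, u1, h11, h12, rfl⟩ ⟨r2, t2, u2, h21, h22, rfl⟩
    refine ⟨r1 * t2 + r2 * t1, t1 * t2, u2 * u1, ?_, ?_, ?_⟩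
    · rw [_root_.map_mul, mul_assoc, ← mul_assoc (f t2) u2 u1, h21, one_mul, h11]
    · rw [_root_.map_mul, mul_assoc, ← mul_assoc u1 (f t1) (f t2), h12, one_mul, h22]
    · have hx : f r1 * u1 = f (r1 * t2) * (u2 * u1) := by
        rw [_root_.map_mul, mul_assoc, ← mul_assoc (f t2) u2 u1, h21, one_mul]
      have hy : f r2 * u2 = f (r2 * t1) * (u2 * u1) := by
        rw [_root_.map_mul, mul_assoc,
          units_comm f hcomm h21 h22 h11 h12, ← mul_assoc (f t1) u1 u2,
          h11, one_mul]
      rw [hx, hy, _root_.map_add, add_mul]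
  mul_mem' := by
    rintro x y ⟨r1, t1, u1, h11, h12, rfl⟩ ⟨r2, t2, u2, h21, h22, rfl⟩
    refine ⟨r1 * r2, t1 * t2, u2 * u1, ?_, ?_, ?_⟩
    · rw [_root_.map_mul, mul_assoc, ← mul_assoc (f t2) u2 u1, h21, one_mul, h11]
    · rw [_root_.map_mul, mul_assoc, ← mul_assoc u1 (f t1) (f t2), h12, one_mul, h22]
    · rw [_root_.map_mul, mul_assoc, ← mul_assoc u1 (f r2) u2, unit_comm f hcomm h11 h12 r2,
        mul_assoc (f r2) u1 u2, units_comm f hcomm h11 h12 h21 h22, ← mul_assoc,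
        ← mul_assoc, mul_assoc (f r1) (f r2) u2]
  neg_mem' := by
    rintro x ⟨r, t, u, h1, h2, rfl⟩
    exact ⟨-r, t, u, h1, h2, by rw [_root_.map_neg, neg_mul]⟩

lemma Esub_mul_comm (hcomm : ∀ a b : R, f a * f b = f b * f a)
    {x y : S} (hx : x ∈ Esub f hcomm) (hy : y ∈ Esub f hcomm) : x * y = y * x := by
  obtain ⟨r1, t1, u1, h11, h12, rfl⟩ := hx
  obtain ⟨r2, t2, u2, h21, h22, rfl⟩ := hy
  rw [mul_assoc, ← mul_assoc u1 (f r2) u2, unit_comm f hcomm h11 h12 r2,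
    mul_assoc (f r2) u1 u2, units_comm f hcomm h11 h12 h21 h22, ← mul_assoc,
    ← mul_assoc, hcomm r1 r2, mul_assoc (f r2) (f r1) u2,
    ← unit_comm f hcomm h21 h22 r1, ← mul_assoc, ← mul_assoc, mul_assoc]

lemma Esub_carrier (hcomm : ∀ a b : R, f a * f b = f b * f a) :
    (Esub f hcomm : Set S)
      = {x : S | ∃ (r t : R) (u : S), f t * u = 1 ∧ u * f t = 1 ∧ x = f r * u} := rfl

end EHelpers

end AuxDivRat

/-- The division closure of a subring `R₀` of `S`. -/
def divisionClosure {S : Type*} [Ring S] (R₀ : Subring S) : Subring S :=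
  sInf {D : Subring S | R₀ ≤ D ∧
    ∀ x ∈ D, ∀ y : S, x * y = 1 → y * x = 1 → y ∈ D}

/-- The rational closure of a subring `R₀` of `S`. -/
def rationalClosure {S : Type*} [Ring S] (R₀ : Subring S) : Subring S :=
  sInf {D : Subring S | R₀ ≤ D ∧
    ∀ (n : ℕ) (A B : Matrix (Fin n) (Fin n) S), (∀ i j, A i j ∈ R₀) →
      A * B = 1 → B * A = 1 → ∀ i j, B i j ∈ D}

/-- For a ring homomorphism `f : R → S` with commutative image, the division
closure and the rational closure of `im f` in `S` both equal
`(im f)T⁻¹ = { f(r)·t⁻¹ }`, a commutative subring of `S`. -/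
theorem closures_eq_imageTinv_of_commutative_image
    {R S : Type*} [Ring R] [Ring S] (f : R →+* S)
    (hcomm : ∀ a b : R, f a * f b = f b * f a) :
    (divisionClosure f.range : Set S) =
      {x : S | ∃ (r t : R) (u : S), f t * u = 1 ∧ u * f t = 1 ∧ x = f r * u} ∧
    (rationalClosure f.range : Set S) =
      {x : S | ∃ (r t : R) (u : S), f t * u = 1 ∧ u * f t = 1 ∧ x = f r * u} ∧
    (∀ x ∈ divisionClosure f.range, ∀ y ∈ divisionClosure f.range, x * y = y * x) := by
  have hrange : f.range ≤ Esub f hcomm := by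
    intro x hx
    obtain ⟨r, rfl⟩ := RingHom.mem_range.mp hx
    rw [← SetLike.mem_coe, Esub_carrier]
    exact ⟨r, 1, 1, by simp, by simp, by simp⟩
  have hEle : ∀ D : Subring S, f.range ≤ D →
      (∀ x ∈ f.range, ∀ y : S, x * y = 1 → y * x = 1 → y ∈ D) → Esub f hcomm ≤ D := by
    intro D hle hclosed x hx
    rw [← SetLike.mem_coe, Esub_carrier] at hx
    obtain ⟨r, t, u, h1, h2, rfl⟩ := hx
    have hu : u ∈ D := hclosed (f t) ⟨t, rfl⟩ u h1 h2
    exact D.mul_mem (hle ⟨r, rfl⟩) hu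
  have hdiv : divisionClosure f.range = Esub f hcomm := by
    apply le_antisymm
    · apply sInf_le
      constructor
      · exact hrange
      · intro x hx y hxy hyx
        rw [← SetLike.mem_coe, Esub_carrier] at hx ⊢
        obtain ⟨r, t, u, h1, h2, rfl⟩ := hx
        -- y is the inverse of f r * u ; then f r is invertible with inverse u * y
        have hfr : f r = (f r * u) * f t := by
          rw [mul_assoc, h2, mul_one]
        have hv1 : f r * (u * y) = 1 := by
          rw [← mul_assoc, hxy]
        have hv2 : (u * y) * f r = 1 := by
          rw [hfr, mul_assoc, ← mul_assoc y (f r * u) (f t), hyx, one_mul, h2]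
        exact ⟨t, r, u * y, hv1, hv2, by rw [← mul_assoc, h1, one_mul]⟩
    · exact le_sInf fun D hD => hEle D hD.1 (fun x hx => hD.2 x (hD.1 hx))
  have hrat : rationalClosure f.range = Esub f hcomm := by
    apply le_antisymm
    · apply sInf_le
      constructor
      · exact hrange
      · intro n A B hA hAB hBA i j
        -- lift A to a matrix over the commutative ring f.range
        letI : CommRing f.range :=
          { (inferInstance : Ring f.range) with
            mul_comm := by
              rintro ⟨a, ha⟩ ⟨b, hb⟩
              obtain ⟨ra, hra⟩ := RingHom.mem_range.mp ha
              obtain ⟨rb, hrb⟩ := RingHom.mem_range.mp hb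
              apply Subtype.ext
              show a * b = b * a
              rw [← hra, ← hrb, hcomm] }
        set φ : f.range →+* S := f.range.subtype with hφ
        set M : Matrix (Fin n) (Fin n) f.range := fun i j => ⟨A i j, hA i j⟩ with hM
        have hmap : M.map φ = A := by ext i j; rfl
        obtain ⟨e, he1, he2, hBform⟩ :=
          det_invertible φ M B (by rw [hmap]; exact hAB) (by rw [hmap]; exact hBA)
        obtain ⟨t, ht⟩ := RingHom.mem_range.mp (M.det).2
        obtain ⟨r, hr⟩ := RingHom.mem_range.mp (M.adjugate i j).2
        rw [← SetLike.mem_coe, Esub_carrier]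
        refine ⟨r, t, e, ?_, ?_, ?_⟩
        · rw [ht]; exact he1
        · rw [ht]; exact he2
        · rw [hBform i j, hr]; rfl
    · refine le_sInf fun D hD => hEle D hD.1 ?_
      intro x hx y hxy hyx
      have := hD.2 1 (fun _ _ => x) (fun _ _ => y) (fun _ _ => hx) ?_ ?_ 0 0
      · exact this
      · ext i j
        simp [Matrix.mul_apply, Matrix.one_apply, Subsingleton.elim i j, hxy]
        exact (Matrix.mul_apply (M := fun _ _ => x) (N := fun _ _ => y)).trans (by simp [hxy])
      · ext i j
        simp [Matrix.mul_apply, Matrix.one_apply, Subsingleton.elim i j, hyx]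
        exact (Matrix.mul_apply (M := fun _ _ => y) (N := fun _ _ => x)).trans (by simp [hyx])
  refine ⟨?_, ?_, ?_⟩
  · rw [hdiv]; exact Esub_carrier f hcomm
  · rw [hrat]; exact Esub_carrier f hcomm
  · intro x hx y hy
    rw [hdiv] at hx hy
    exact Esub_mul_comm f hcomm hx hy
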